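/- Advantage dominance of max⁺-aggregation: for every 0 ≤ t < H and every s ∈ S, the max⁺-aggregation policy π⊕ satisfies A^{f⁺}_t(s, π⊕) = max_{a∈A} A^{f⁺}_t(s, a) ≥ A^{f⁺}_t(s, π°) ≥ 0, where π° is the max⁺-following policy. -/

import Mathlib

open scoped BigOperators

/-- Expectation of a real-valued function under a probability mass function on a finite type. -/
noncomputable def pexp {α : Type*} [Fintype α] (p : PMF α) (f : α → ℝ) : ℝ :=
  ∑ a, (p a).toReal * f a

lemma pexp_sum_one {α : Type*} [Fintype α] (p : PMF α) : ∑ a, (p a).toReal = 1 := by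
  have h := p.tsum_coe
  rw [tsum_fintype] at h
  rw [← ENNReal.toReal_sum (fun a _ => (p.apply_lt_top a).ne), h, ENNReal.toReal_one]

lemma pexp_pure {α : Type*} [Fintype α] [DecidableEq α] (a : α) (f : α → ℝ) :
    pexp (PMF.pure a) f = f a := by
  unfold pexp
  rw [Finset.sum_eq_single a]
  · simp
  · intro b _ hb; simp [PMF.pure_apply, hb]
  · simp

lemma pexp_mono {α : Type*} [Fintype α] (p : PMF α) {f g : α → ℝ} (h : ∀ a, f a ≤ g a) :
    pexp p f ≤ pexp p g := by
  apply Finset.sum_le_sum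
  intro a _
  exact mul_le_mul_of_nonneg_left (h a) ENNReal.toReal_nonneg

lemma pexp_sub_const {α : Type*} [Fintype α] (p : PMF α) (f : α → ℝ) (c : ℝ) :
    pexp p (fun a => f a - c) = pexp p f - c := by
  unfold pexp
  simp only [mul_sub]
  rw [Finset.sum_sub_distrib, ← Finset.sum_mul, pexp_sum_one, one_mul]

lemma pexp_le_sup {α : Type*} [Fintype α] [Nonempty α] (p : PMF α) (f : α → ℝ) :
    pexp p f ≤ ⨆ a, f a := by
  have hb : BddAbove (Set.range f) := (Set.finite_range f).bddAbove
  calc pexp p f ≤ pexp p (fun _ => ⨆ a, f a) :=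
        pexp_mono p (fun a => le_ciSup hb a)
    _ = ⨆ a, f a := by unfold pexp; rw [← Finset.sum_mul, pexp_sum_one, one_mul]

/-- Advantage dominance of max⁺-aggregation: for every `0 ≤ t < H` and every state `s`,
the max⁺-aggregation policy `π⊕` (playing deterministically `a*(t,s) ∈ argmax_a A^{f⁺}_t(s,a)`)
satisfies `A^{f⁺}_t(s, π⊕) = max_{a∈A} A^{f⁺}_t(s, a) ≥ A^{f⁺}_t(s, π°) ≥ 0`,
where `π°` is the max⁺-following policy. -/
theorem maxplus_aggregation_advantage_dominance
    {S A : Type*} [Fintype S] [Nonempty S] [Fintype A] [Nonempty A]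
    (P : S → A → PMF S) (r : S → A → ℝ)
    (hr : ∀ s a, 0 ≤ r s a ∧ r s a ≤ 1)
    (H : ℕ)
    (K : ℕ) (hK : 1 ≤ K)
    (πs : Fin K → ℕ → S → PMF A)
    (Vs : Fin K → ℕ → S → ℝ)
    (hVsH : ∀ k s, Vs k H s = 0)
    (hVs : ∀ k t, t < H → ∀ s,
      Vs k t s = pexp (πs k t s) (fun a => r s a + pexp (P s a) (Vs k (t + 1))))
    (fplus : ℕ → S → ℝ)
    (hfplus : ∀ t s, fplus t s = ⨆ k : Fin K, Vs k t s)
    (kstar : ℕ → S → Fin K)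
    (hkstar : ∀ t s, Vs (kstar t s) t s = fplus t s)
    (astar : ℕ → S → A)
    (hastar : ∀ t s a,
      r s a + pexp (P s a) (fplus (t + 1)) - fplus t s ≤
        r s (astar t s) + pexp (P s (astar t s)) (fplus (t + 1)) - fplus t s) :
    ∀ t, t < H → ∀ s,
      (pexp (PMF.pure (astar t s))
          (fun a => r s a + pexp (P s a) (fplus (t + 1)) - fplus t s) =
        ⨆ a : A, (r s a + pexp (P s a) (fplus (t + 1)) - fplus t s)) ∧
      (pexp (πs (kstar t s) t s)
          (fun a => r s a + pexp (P s a) (fplus (t + 1)) - fplus t s) ≤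
        ⨆ a : A, (r s a + pexp (P s a) (fplus (t + 1)) - fplus t s)) ∧
      (0 ≤ pexp (πs (kstar t s) t s)
          (fun a => r s a + pexp (P s a) (fplus (t + 1)) - fplus t s)) := by
  intro t ht s
  classical
  have h1 : pexp (PMF.pure (astar t s))
      (fun a => r s a + pexp (P s a) (fplus (t + 1)) - fplus t s) =
      ⨆ a : A, (r s a + pexp (P s a) (fplus (t + 1)) - fplus t s) := by
    rw [pexp_pure]
    exact le_antisymm
      (le_ciSup (f := fun a : A => r s a + pexp (P s a) (fplus (t + 1)) - fplus t s)
        ((Set.finite_range _).bddAbove) (astar t s))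
      (ciSup_le (fun a => hastar t s a))
  refine ⟨h1, pexp_le_sup _ _, ?_⟩
  have hmono : ∀ a, r s a + pexp (P s a) (Vs (kstar t s) (t + 1)) ≤
      r s a + pexp (P s a) (fplus (t + 1)) := by
    intro a
    apply (add_le_add_iff_left _).mpr
    apply pexp_mono
    intro s'
    rw [hfplus]
    exact le_ciSup (f := fun k : Fin K => Vs k (t + 1) s')
      ((Set.finite_range _).bddAbove) (kstar t s)
  have hle : fplus t s ≤ pexp (πs (kstar t s) t s)
      (fun a => r s a + pexp (P s a) (fplus (t + 1))) := by
    calc fplus t s = Vs (kstar t s) t s := (hkstar t s).symm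
      _ = pexp (πs (kstar t s) t s)
            (fun a => r s a + pexp (P s a) (Vs (kstar t s) (t + 1))) := hVs _ t ht s
      _ ≤ _ := pexp_mono _ hmono
  have := pexp_sub_const (πs (kstar t s) t s)
      (fun a => r s a + pexp (P s a) (fplus (t + 1))) (fplus t s)
  rw [this]
  linarith
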